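/- Let X ⊆ ℝ be closed and bounded and F : conv(X) → ℝ convex. For x̄ ∈ conv(X) \ X define x̄₋ = max{x ∈ X : x < x̄} and x̄₊ = min{x ∈ X : x > x̄}, and define F_X on conv(X) by F_X(x) = F(x) if x ∈ X, and F_X(x) = λF(x₋) + (1−λ)F(x₊) when x ∉ X with x = λx₋ + (1−λ)x₊, λ ∈ (0,1). Then the convex hull of the epigraph of F restricted to X equals the epigraph of F_X over conv(X): conv({(x,z) : x ∈ X, z ≥ F(x)}) = {(x,z) : x ∈ conv(X), z ≥ F_X(x)}. -/

import Mathlib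

open Classical

/-- The "secant-filled" version `F_X` of `F` over the gaps of `X`: on `X` it
agrees with `F`, and on a gap it is the linear interpolation between the values
of `F` at the nearest points `x₋ = max {y ∈ X | y < x}` and
`x₊ = min {y ∈ X | y > x}` of `X` on either side. -/
noncomputable def secantFill (X : Set ℝ) (F : ℝ → ℝ) (x : ℝ) : ℝ :=
  if x ∈ X then F x
  else
    (((sInf {y | y ∈ X ∧ x < y}) - x) * F (sSup {y | y ∈ X ∧ y < x}) +
        (x - (sSup {y | y ∈ X ∧ y < x})) * F (sInf {y | y ∈ X ∧ x < y})) /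
      ((sInf {y | y ∈ X ∧ x < y}) - (sSup {y | y ∈ X ∧ y < x}))

private lemma convexHull_eq_Icc_aux {X : Set ℝ} (hX : IsClosed X)
    (hB : Bornology.IsBounded X) (hne : X.Nonempty) :
    convexHull ℝ X = Set.Icc (sInf X) (sSup X) := by
  apply Set.Subset.antisymm
  · exact convexHull_min (fun x hx => ⟨csInf_le hB.bddBelow hx, le_csSup hB.bddAbove hx⟩)
      (convex_Icc _ _)
  · have hm := hX.csInf_mem hne hB.bddBelow
    have hM := hX.csSup_mem hne hB.bddAbove
    rw [← segment_eq_Icc (le_trans (csInf_le hB.bddBelow hne.some_mem) (le_csSup hB.bddAbove hne.some_mem))]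
    exact segment_subset_convexHull hm hM

private lemma gap_spec_aux {X : Set ℝ} (hX : IsClosed X) (hB : Bornology.IsBounded X)
    (hne : X.Nonempty) {x : ℝ} (hx : x ∈ convexHull ℝ X) (hxX : x ∉ X) :
    sSup {y | y ∈ X ∧ y < x} ∈ X ∧ sInf {y | y ∈ X ∧ x < y} ∈ X ∧
      sSup {y | y ∈ X ∧ y < x} < x ∧ x < sInf {y | y ∈ X ∧ x < y} ∧
      ∀ y ∈ X, y ≤ sSup {y | y ∈ X ∧ y < x} ∨ sInf {y | y ∈ X ∧ x < y} ≤ y := by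
  rw [convexHull_eq_Icc_aux hX hB hne] at hx
  have hm := hX.csInf_mem hne hB.bddBelow
  have hM := hX.csSup_mem hne hB.bddAbove
  have hmx : sInf X < x := lt_of_le_of_ne hx.1 (fun h => hxX (h ▸ hm))
  have hxM : x < sSup X := lt_of_le_of_ne hx.2 (fun h => hxX (h.symm ▸ hM))
  set A : Set ℝ := {y | y ∈ X ∧ y < x} with hA
  set B : Set ℝ := {y | y ∈ X ∧ x < y} with hB'
  have hAne : A.Nonempty := ⟨sInf X, hm, hmx⟩
  have hBne : B.Nonempty := ⟨sSup X, hM, hxM⟩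
  have hAbdd : BddAbove A := ⟨x, fun y hy => hy.2.le⟩
  have hBbdd : BddBelow B := ⟨x, fun y hy => hy.2.le⟩
  have haX : sSup A ∈ X := by
    have h1 : sSup A ∈ closure A := csSup_mem_closure hAne hAbdd
    exact hX.closure_subset_iff.mpr (fun y hy => hy.1) h1
  have hbX : sInf B ∈ X := by
    have h1 : sInf B ∈ closure B := csInf_mem_closure hBne hBbdd
    exact hX.closure_subset_iff.mpr (fun y hy => hy.1) h1
  have hax : sSup A < x :=
    lt_of_le_of_ne (csSup_le hAne (fun y hy => hy.2.le)) (fun h => hxX (h ▸ haX))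
  have hxb : x < sInf B :=
    lt_of_le_of_ne (le_csInf hBne (fun y hy => hy.2.le)) (fun h => hxX (h.symm ▸ hbX))
  refine ⟨haX, hbX, hax, hxb, fun y hy => ?_⟩
  rcases lt_or_ge y x with h | h
  · exact Or.inl (le_csSup hAbdd ⟨hy, h⟩)
  · exact Or.inr (csInf_le hBbdd ⟨hy, lt_of_le_of_ne h (fun h' => hxX (h' ▸ hy))⟩)

/-- The secant line of a convex function between `a < b` lies below the
function outside `[a, b]`. -/
private lemma secant_le_aux {X : Set ℝ} {F : ℝ → ℝ}
    (hF : ConvexOn ℝ (convexHull ℝ X) F) {a b y : ℝ}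
    (ha : a ∈ convexHull ℝ X) (hb : b ∈ convexHull ℝ X) (hy : y ∈ convexHull ℝ X)
    (hab : a < b) (hy' : y ≤ a ∨ b ≤ y) :
    F a + (F b - F a) / (b - a) * (y - a) ≤ F y := by
  have hba : (0:ℝ) < b - a := sub_pos.2 hab
  rcases hy' with h | h
  · rcases h.eq_or_lt with rfl | h
    · simp
    · have hs := hF.slope_mono_adjacent hy hb h hab
      -- (F a - F y) / (a - y) ≤ (F b - F a) / (b - a)
      have hay : (0:ℝ) < a - y := sub_pos.2 h
      rw [div_le_div_iff₀ hay hba] at hs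
      -- (F a - F y) * (b - a) ≤ (F b - F a) * (a - y)
      have h2 : F a - F y ≤ (F b - F a) / (b - a) * (a - y) := by
        rw [div_mul_eq_mul_div, le_div_iff₀ hba]
        linarith
      have h3 : (F b - F a) / (b - a) * (y - a) = -((F b - F a) / (b - a) * (a - y)) := by ring
      linarith
  · rcases h.eq_or_lt with rfl | h
    · have h4 : (F b - F a) / (b - a) * (b - a) = F b - F a :=
        div_mul_cancel₀ _ (sub_ne_zero.2 hab.ne')
      linarith
    · have hs := hF.slope_mono_adjacent ha hy hab h
      have hyb : (0:ℝ) < y - b := sub_pos.2 h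
      have h2 : (F b - F a) / (b - a) * (y - b) ≤ F y - F b := by
        rw [← le_div_iff₀ hyb]; exact hs
      have h4 : (F b - F a) / (b - a) * (b - a) = F b - F a :=
        div_mul_cancel₀ _ (sub_ne_zero.2 hab.ne')
      have h5 : (F b - F a) / (b - a) * (y - a)
          = (F b - F a) / (b - a) * (b - a) + (F b - F a) / (b - a) * (y - b) := by ring
      linarith

private lemma secantFill_sum_le_aux {X : Set ℝ} (hX : IsClosed X)
    (hB : Bornology.IsBounded X) (hne : X.Nonempty) {F : ℝ → ℝ}
    (hF : ConvexOn ℝ (convexHull ℝ X) F) {ι : Type} (t : Finset ι) (w p : ι → ℝ)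
    (hw0 : ∀ i ∈ t, 0 ≤ w i) (hw1 : ∑ i ∈ t, w i = 1) (hp : ∀ i ∈ t, p i ∈ X) :
    secantFill X F (∑ i ∈ t, w i * p i) ≤ ∑ i ∈ t, w i * F (p i) := by
  set x := ∑ i ∈ t, w i * p i with hxdef
  have hxmem : x ∈ convexHull ℝ X := by
    have h := t.centerMass_mem_convexHull hw0 (by rw [hw1]; norm_num)
      (fun i hi => hp i hi)
    rw [Finset.centerMass_eq_of_sum_1 _ _ hw1] at h
    simp only [smul_eq_mul] at h
    exact h
  by_cases hxX : x ∈ X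
  · rw [show secantFill X F x = F x from if_pos hxX]
    have h := hF.map_sum_le hw0 hw1 (fun i hi => subset_convexHull ℝ X (hp i hi))
    simpa [smul_eq_mul, ← hxdef] using h
  · obtain ⟨haX, hbX, hax, hxb, hsep⟩ := gap_spec_aux hX hB hne hxmem hxX
    have hval : secantFill X F x =
        ((sInf {y | y ∈ X ∧ x < y} - x) * F (sSup {y | y ∈ X ∧ y < x}) +
          (x - sSup {y | y ∈ X ∧ y < x}) * F (sInf {y | y ∈ X ∧ x < y})) /
        (sInf {y | y ∈ X ∧ x < y} - sSup {y | y ∈ X ∧ y < x}) := if_neg hxX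
    set a := sSup {y | y ∈ X ∧ y < x} with hadef
    set b := sInf {y | y ∈ X ∧ x < y} with hbdef
    have hab : a < b := hax.trans hxb
    have hba : (0:ℝ) < b - a := sub_pos.2 hab
    have hval2 : secantFill X F x = F a + (F b - F a) / (b - a) * (x - a) := by
      rw [hval]; field_simp; ring
    rw [hval2]
    have hpt : ∀ i ∈ t, F a + (F b - F a) / (b - a) * (p i - a) ≤ F (p i) := fun i hi =>
      secant_le_aux hF (subset_convexHull ℝ X haX) (subset_convexHull ℝ X hbX)
        (subset_convexHull ℝ X (hp i hi)) hab (hsep _ (hp i hi))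
    have hsum : ∑ i ∈ t, w i * (F a + (F b - F a) / (b - a) * (p i - a))
        ≤ ∑ i ∈ t, w i * F (p i) :=
      Finset.sum_le_sum (fun i hi => mul_le_mul_of_nonneg_left (hpt i hi) (hw0 i hi))
    have heq : ∑ i ∈ t, w i * (F a + (F b - F a) / (b - a) * (p i - a))
        = F a + (F b - F a) / (b - a) * (x - a) := by
      have hc : ∀ i ∈ t, w i * (F a + (F b - F a) / (b - a) * (p i - a))
          = (F a - (F b - F a) / (b - a) * a) * w i
            + (F b - F a) / (b - a) * (w i * p i) := fun i _ => by ring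
      rw [Finset.sum_congr rfl hc, Finset.sum_add_distrib, ← Finset.mul_sum,
        ← Finset.mul_sum, hw1, ← hxdef]
      ring
    linarith

/-- For a closed bounded set `X ⊆ ℝ` and a convex function `F` on `conv(X)`,
the convex hull of the epigraph of `F` over `X` equals the epigraph of the
secant-filled function `F_X` over `conv(X)`. -/
theorem convexHull_epigraph_eq_epigraph_secantFill (X : Set ℝ)
    (hX : IsClosed X) (hB : Bornology.IsBounded X)
    (F : ℝ → ℝ) (hF : ConvexOn ℝ (convexHull ℝ X) F) :
    convexHull ℝ {p : ℝ × ℝ | p.1 ∈ X ∧ F p.1 ≤ p.2} =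
      {p : ℝ × ℝ | p.1 ∈ convexHull ℝ X ∧ secantFill X F p.1 ≤ p.2} := by
  rcases X.eq_empty_or_nonempty with rfl | hne
  · have h1 : {p : ℝ × ℝ | p.1 ∈ (∅ : Set ℝ) ∧ F p.1 ≤ p.2} = ∅ := by ext p; simp
    rw [h1, convexHull_empty, convexHull_empty]
    ext p; simp
  apply Set.Subset.antisymm
  · intro q hq
    rw [convexHull_eq] at hq
    obtain ⟨ι, t, w, z, hw0, hw1, hz, hcm⟩ := hq
    have h1 : q.1 = ∑ i ∈ t, w i * (z i).1 := by
      rw [← hcm, Finset.centerMass_eq_of_sum_1 _ _ hw1, Prod.fst_sum]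
      simp [smul_eq_mul]
    have h2 : q.2 = ∑ i ∈ t, w i * (z i).2 := by
      rw [← hcm, Finset.centerMass_eq_of_sum_1 _ _ hw1, Prod.snd_sum]
      simp [smul_eq_mul]
    constructor
    · rw [h1]
      have h := t.centerMass_mem_convexHull hw0 (by rw [hw1]; norm_num)
        (fun i hi => (hz i hi).1)
      rwa [Finset.centerMass_eq_of_sum_1 _ _ hw1] at h
    · rw [h1, h2]
      calc secantFill X F (∑ i ∈ t, w i * (z i).1)
          ≤ ∑ i ∈ t, w i * F (z i).1 :=
            secantFill_sum_le_aux hX hB hne hF t w _ hw0 hw1 (fun i hi => (hz i hi).1)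
        _ ≤ ∑ i ∈ t, w i * (z i).2 :=
            Finset.sum_le_sum (fun i hi =>
              mul_le_mul_of_nonneg_left (hz i hi).2 (hw0 i hi))
  · rintro q ⟨hq1, hq2⟩
    by_cases hxX : q.1 ∈ X
    · refine subset_convexHull ℝ _ ⟨hxX, ?_⟩
      rwa [show secantFill X F q.1 = F q.1 from if_pos hxX] at hq2
    · obtain ⟨haX, hbX, hax, hxb, _⟩ := gap_spec_aux hX hB hne hq1 hxX
      have hval : secantFill X F q.1 =
          ((sInf {y | y ∈ X ∧ q.1 < y} - q.1) * F (sSup {y | y ∈ X ∧ y < q.1}) +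
            (q.1 - sSup {y | y ∈ X ∧ y < q.1}) * F (sInf {y | y ∈ X ∧ q.1 < y})) /
          (sInf {y | y ∈ X ∧ q.1 < y} - sSup {y | y ∈ X ∧ y < q.1}) := if_neg hxX
      set a := sSup {y | y ∈ X ∧ y < q.1} with hadef
      set b := sInf {y | y ∈ X ∧ q.1 < y} with hbdef
      have hab : a < b := hax.trans hxb
      have hba : (0:ℝ) < b - a := sub_pos.2 hab
      have hδ : 0 ≤ q.2 - secantFill X F q.1 := by linarith
      have hq1m : (a, F a + (q.2 - secantFill X F q.1)) ∈
          {p : ℝ × ℝ | p.1 ∈ X ∧ F p.1 ≤ p.2} := ⟨haX, by simp; linarith⟩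
      have hq2m : (b, F b + (q.2 - secantFill X F q.1)) ∈
          {p : ℝ × ℝ | p.1 ∈ X ∧ F p.1 ≤ p.2} := ⟨hbX, by simp; linarith⟩
      have hl0 : (0:ℝ) ≤ (b - q.1) / (b - a) := div_nonneg (by linarith) hba.le
      have hm0 : (0:ℝ) ≤ (q.1 - a) / (b - a) := div_nonneg (by linarith) hba.le
      have hlm : (b - q.1) / (b - a) + (q.1 - a) / (b - a) = 1 := by
        field_simp
        ring
      have key := (convex_convexHull ℝ {p : ℝ × ℝ | p.1 ∈ X ∧ F p.1 ≤ p.2})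
        (subset_convexHull ℝ _ hq1m) (subset_convexHull ℝ _ hq2m) hl0 hm0 hlm
      have hpe : ((b - q.1) / (b - a)) • ((a, F a + (q.2 - secantFill X F q.1)) : ℝ × ℝ)
          + ((q.1 - a) / (b - a)) • ((b, F b + (q.2 - secantFill X F q.1)) : ℝ × ℝ) = q := by
        rw [Prod.ext_iff]
        constructor
        · simp only [Prod.smul_mk, Prod.mk_add_mk, smul_eq_mul]
          field_simp
          ring
        · simp only [Prod.smul_mk, Prod.mk_add_mk, smul_eq_mul]
          rw [hval]
          field_simp
          ring
      rwa [hpe] at key
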